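/- Let K be a finite index set, C > 0, and d : K → ℂ with Re d_k ≥ 0 and Im d_k ≥ 0 for every k ∈ K. Suppose S ⊆ K satisfies |Σ_{k∈S} d_k| ≤ C and Re d_k + Im d_k ≤ C for every k ∈ S. Then there exists T ⊆ S such that Re(Σ_{k∈T} d_k) + Im(Σ_{k∈T} d_k) ≤ C and Re(Σ_{k∈S\T} d_k) + Im(Σ_{k∈S\T} d_k) ≤ C. -/

import Mathlib

/-- Case (3) of the C-KP analysis: a feasible demand sum all of whose
individual demands lie in the triangle `D₁` can be split into two subset sums
each lying in `D₁`. -/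
theorem feasible_split_into_two_triangles {K : Type*} [Fintype K] [DecidableEq K]
    (C : ℝ) (hC : 0 < C) (d : K → ℂ)
    (hre : ∀ k, 0 ≤ (d k).re) (him : ∀ k, 0 ≤ (d k).im)
    (S : Finset K) (hS : ‖∑ k ∈ S, d k‖ ≤ C)
    (hD1 : ∀ k ∈ S, (d k).re + (d k).im ≤ C) :
    ∃ T ⊆ S,
      (∑ k ∈ T, d k).re + (∑ k ∈ T, d k).im ≤ C ∧
      (∑ k ∈ S \ T, d k).re + (∑ k ∈ S \ T, d k).im ≤ C := by
  classical
  set p : K → ℝ := fun k => (d k).re + (d k).im with hp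
  have hp0 : ∀ k, 0 ≤ p k := fun k => add_nonneg (hre k) (him k)
  have hsum : ∀ (U : Finset K),
      (∑ k ∈ U, d k).re + (∑ k ∈ U, d k).im = ∑ k ∈ U, p k := by
    intro U
    simp [hp, Complex.re_sum, Complex.im_sum, Finset.sum_add_distrib]
  have htot : ∑ k ∈ S, p k ≤ Real.sqrt 2 * C := by
    set z := ∑ k ∈ S, d k with hz
    have hre' : 0 ≤ z.re := by
      rw [hz, Complex.re_sum]; exact Finset.sum_nonneg fun k _ => hre k
    have him' : 0 ≤ z.im := by
      rw [hz, Complex.im_sum]; exact Finset.sum_nonneg fun k _ => him k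
    have h2 : (z.re + z.im) ^ 2 ≤ 2 * ‖z‖ ^ 2 := by
      rw [Complex.sq_norm, Complex.normSq_apply]
      nlinarith [sq_nonneg (z.re - z.im)]
    have h3 : z.re + z.im ≤ Real.sqrt 2 * ‖z‖ := by
      calc z.re + z.im = Real.sqrt ((z.re + z.im) ^ 2) :=
            (Real.sqrt_sq (by positivity)).symm
        _ ≤ Real.sqrt (2 * ‖z‖ ^ 2) := Real.sqrt_le_sqrt h2
        _ = Real.sqrt 2 * ‖z‖ := by
            rw [Real.sqrt_mul (by norm_num), Real.sqrt_sq (norm_nonneg z)]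
    calc ∑ k ∈ S, p k = z.re + z.im := (hsum S).symm
      _ ≤ Real.sqrt 2 * ‖z‖ := h3
      _ ≤ Real.sqrt 2 * C := mul_le_mul_of_nonneg_left hS (Real.sqrt_nonneg 2)
  have hne : ((S.powerset).filter (fun U => ∑ k ∈ U, p k ≤ C)).Nonempty :=
    ⟨∅, by simp [hC.le]⟩
  obtain ⟨T, hTmem, hTmax⟩ :=
    Finset.exists_max_image _ (fun U => ∑ k ∈ U, p k) hne
  simp only [Finset.mem_filter, Finset.mem_powerset] at hTmem
  obtain ⟨hTS, hTle⟩ := hTmem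
  refine ⟨T, hTS, ?_, ?_⟩
  · rw [hsum]; exact hTle
  · rw [hsum]
    by_contra hRc
    push_neg at hRc
    -- hRc : C < ∑ k ∈ S \ T, p k
    set R' := (S \ T).filter (fun k => p k ≠ 0) with hR'def
    have hsumR' : ∑ k ∈ R', p k = ∑ k ∈ S \ T, p k :=
      Finset.sum_filter_ne_zero _
    have hmax : ∀ k ∈ S \ T, p k ≠ 0 → C < ∑ i ∈ T, p i + p k := by
      intro k hk hk0
      by_contra hle
      push_neg at hle
      have hknT : k ∉ T := (Finset.mem_sdiff.mp hk).2
      have hins : insert k T ∈ (S.powerset).filter (fun U => ∑ i ∈ U, p i ≤ C) := by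
        simp only [Finset.mem_filter, Finset.mem_powerset]
        constructor
        · exact Finset.insert_subset (Finset.mem_sdiff.mp hk).1 hTS
        · rw [Finset.sum_insert hknT]; linarith
      have := hTmax _ hins
      rw [Finset.sum_insert hknT] at this
      have : p k ≤ 0 := by linarith
      exact hk0 (le_antisymm this (hp0 k))
    have hcard : 1 < R'.card := by
      by_contra h
      push_neg at h
      have huniq := Finset.card_le_one.mp h
      rcases R'.eq_empty_or_nonempty with he | ⟨a, ha⟩
      · rw [he] at hsumR'
        simp at hsumR'
        linarith
      · have hRa : R' = {a} :=
          Finset.eq_singleton_iff_unique_mem.mpr ⟨ha, fun b hb => huniq b hb a ha⟩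
        have haS : a ∈ S := (Finset.mem_sdiff.mp (Finset.mem_of_mem_filter a ha)).1
        have h1 : ∑ k ∈ R', p k = p a := by rw [hRa, Finset.sum_singleton]
        have h2 : p a ≤ C := by simp only [hp]; exact hD1 a haS
        rw [hsumR'] at h1
        linarith
    obtain ⟨j, hj, k, hk, hjk⟩ := Finset.one_lt_card.mp hcard
    have hjmem := Finset.mem_filter.mp hj
    have hkmem := Finset.mem_filter.mp hk
    have hmaxj := hmax j hjmem.1 hjmem.2
    have hmaxk := hmax k hkmem.1 hkmem.2
    have hpair : p j + p k ≤ ∑ i ∈ S \ T, p i := by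
      have hsub : ({j, k} : Finset K) ⊆ S \ T := by
        intro x hx
        simp only [Finset.mem_insert, Finset.mem_singleton] at hx
        rcases hx with rfl | rfl
        · exact hjmem.1
        · exact hkmem.1
      calc p j + p k = ∑ i ∈ ({j, k} : Finset K), p i :=
            (Finset.sum_pair hjk).symm
        _ ≤ ∑ i ∈ S \ T, p i :=
            Finset.sum_le_sum_of_subset_of_nonneg hsub fun i _ _ => hp0 i
    have hsplit : ∑ i ∈ S \ T, p i + ∑ i ∈ T, p i = ∑ i ∈ S, p i :=
      Finset.sum_sdiff hTS
    nlinarith [sq_nonneg (2 * Real.sqrt 2 - 3), Real.sq_sqrt (by norm_num : (0:ℝ) ≤ 2),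
      Real.sqrt_nonneg 2, hC, htot, hRc, hmaxj, hmaxk, hpair, hsplit]
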